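/- Let E be a nonempty Hausdorff space and let X be an E-completely regular space. Let e : X → E^{C(X,E)} be the evaluation map e(x)(f) = f(x) and let Y be the closure of e[X] in E^{C(X,E)}. Then ⟨Y, e⟩ is a Hewitt E-compact extension of X. Moreover, for every Hewitt E-compact extension ⟨Y', h⟩ of X: (a) there exists a homeomorphism g : Y → Y' with g ∘ e = h (so any two Hewitt E-compact extensions of X are equivalent), and (b) for every E-compact space Z and every continuous f : X → Z there exists a continuous f̃ : Y' → Z with f̃ ∘ h = f. -/

import Mathlib

open Topology TopologicalSpace Set

universe u v w

/-- `X` is `E`-completely regular if it is homeomorphic to a subspace of a power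
`E^J` for some nonempty index set `J`. -/
def IsECompletelyRegular (E : Type u) (X : Type v)
    [TopologicalSpace E] [TopologicalSpace X] : Prop :=
  ∃ (J : Type (max u v)) (_ : Nonempty J) (e : X → J → E), IsEmbedding e

/-- `X` is `E`-compact if it is homeomorphic to a closed subspace of a power `E^J`
for some nonempty index set `J`. -/
def IsECompact (E : Type u) (X : Type v)
    [TopologicalSpace E] [TopologicalSpace X] : Prop :=
  ∃ (J : Type (max u v)) (_ : Nonempty J) (e : X → J → E),
    IsEmbedding e ∧ IsClosed (Set.range e)

/-- `⟨Y, h⟩` is a Hewitt `E`-compact extension of `X`: `h` is a homeomorphic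
embedding with dense image, `Y` is `E`-compact, and every continuous `f : X → E`
factors continuously through `h`. -/
def IsHewittECompactExtension (E : Type u) (X : Type v) (Y : Type w)
    [TopologicalSpace E] [TopologicalSpace X] [TopologicalSpace Y] (h : X → Y) : Prop :=
  IsEmbedding h ∧ DenseRange h ∧ IsECompact E Y ∧
    ∀ f : X → E, Continuous f → ∃ g : Y → E, Continuous g ∧ g ∘ h = f

/-- The evaluation map `x ↦ (f ↦ f x)` from `X` into `E^{C(X,E)}`. -/
def contEval (E : Type u) (X : Type v) [TopologicalSpace E] [TopologicalSpace X] :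
    X → (C(X, E) → E) := fun x f => f x

/-- The corestriction of the evaluation map to the closure of its range. -/
def contEvalK (E : Type u) (X : Type v) [TopologicalSpace E] [TopologicalSpace X] :
    X → ↥(closure (Set.range (contEval E X))) :=
  fun x => ⟨contEval E X x, subset_closure ⟨x, rfl⟩⟩

section Aux

variable {E : Type u} {X : Type v}

/-- Auxiliary: factoring through a Hewitt extension into any E-compact space. -/
theorem factor_aux {Y' : Type w} [TopologicalSpace E] [TopologicalSpace X]
    [TopologicalSpace Y'] {h : X → Y'} (hext : IsHewittECompactExtension E X Y' h)
    {Z : Type*} [TopologicalSpace Z] (hZ : IsECompact E Z)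
    {f : X → Z} (hf : Continuous f) : ∃ g : Y' → Z, Continuous g ∧ g ∘ h = f := by
  obtain ⟨J, hJ, ez, hze, hzc⟩ := hZ
  choose g hgc hgh using fun j : J =>
    hext.2.2.2 (fun x => ez (f x) j) ((continuous_apply j).comp (hze.continuous.comp hf))
  set G : Y' → J → E := fun y j => g j y with hG
  have hGc : Continuous G := continuous_pi fun j => hgc j
  have hGh : ∀ x, G (h x) = ez (f x) := fun x => funext fun j => congrFun (hgh j) x
  have hrange : ∀ y, G y ∈ Set.range ez := by
    have hsub : Set.range h ⊆ G ⁻¹' (Set.range ez) := by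
      rintro _ ⟨x, rfl⟩; exact ⟨f x, (hGh x).symm⟩
    have hcl : IsClosed (G ⁻¹' (Set.range ez)) := hzc.preimage hGc
    intro y
    exact closure_minimal hsub hcl (hext.2.1 y)
  let φ := hze.toHomeomorph
  refine ⟨fun y => φ.symm ⟨G y, hrange y⟩,
    φ.symm.continuous.comp (hGc.subtype_mk _), funext fun x => ?_⟩
  have h1 : (⟨G (h x), hrange (h x)⟩ : Set.range ez) = φ (f x) := Subtype.ext (hGh x)
  simp only [Function.comp_apply, h1, Homeomorph.symm_apply_apply]

theorem part1_aux [TopologicalSpace E] [TopologicalSpace X] [T2Space E] [Nonempty E]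
    (hX : IsECompletelyRegular E X) :
    IsHewittECompactExtension E X ↥(closure (Set.range (contEval E X))) (contEvalK E X) := by
  obtain ⟨J0, hJ0, e0, he0⟩ := hX
  have hcont : Continuous (contEval E X) := continuous_pi fun f => f.continuous
  have hembed : IsEmbedding (contEval E X) := by
    set p : (C(X, E) → E) → (J0 → E) :=
      fun g j => g ⟨fun x => e0 x j, (continuous_apply j).comp he0.continuous⟩ with hp
    have hpc : Continuous p := continuous_pi fun j => continuous_apply _
    have hpe : p ∘ contEval E X = e0 := rfl
    exact IsEmbedding.of_comp hcont hpc (hpe ▸ he0)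
  have hembK : IsEmbedding (contEvalK E X) :=
    hembed.codRestrict _ fun x => subset_closure (Set.mem_range_self x)
  refine ⟨hembK, ?_, ?_, ?_⟩
  · intro y
    rw [closure_subtype, ← Set.range_comp]
    exact y.2
  · refine ⟨C(X, E), ⟨ContinuousMap.const X (Classical.arbitrary E)⟩,
      Subtype.val, IsEmbedding.subtypeVal, ?_⟩
    rw [Subtype.range_val]
    exact isClosed_closure
  · intro f hf
    exact ⟨fun y => y.1 ⟨f, hf⟩, (continuous_apply _).comp continuous_subtype_val, rfl⟩

end Aux

/-- For a nonempty Hausdorff space `E` and an `E`-completely regular space `X`, the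
closure `Y` of the image of the evaluation map `X → E^{C(X,E)}`, together with the
evaluation map, is a Hewitt `E`-compact extension of `X`; moreover for every Hewitt
`E`-compact extension `⟨Y', h⟩` of `X` there is a homeomorphism `g : Y ≃ₜ Y'` with
`g ∘ e = h`, and every continuous map from `X` to an `E`-compact space `Z` factors
continuously through `h`. -/
theorem stmt7 {E : Type u} {X : Type v} [TopologicalSpace E] [TopologicalSpace X]
    [T2Space E] [Nonempty E] (hX : IsECompletelyRegular E X) :
    IsHewittECompactExtension E X ↥(closure (Set.range (contEval E X))) (contEvalK E X) ∧
    ∀ (Y' : Type (max u v)) [TopologicalSpace Y'] (h : X → Y'),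
      IsHewittECompactExtension E X Y' h →
      ((∃ g : ↥(closure (Set.range (contEval E X))) ≃ₜ Y',
          ∀ x : X, g (contEvalK E X x) = h x) ∧
       (∀ (Z : Type (max u v)) [TopologicalSpace Z], IsECompact E Z →
          ∀ f : X → Z, Continuous f → ∃ g : Y' → Z, Continuous g ∧ g ∘ h = f)) := by
  have P1 := part1_aux hX
  refine ⟨P1, fun Y' _ h hext => ?_⟩
  constructor
  · obtain ⟨φ, hφc, hφe⟩ := factor_aux P1 hext.2.2.1 hext.1.continuous
    obtain ⟨ψ, hψc, hψh⟩ := factor_aux hext P1.2.2.1 P1.1.continuous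
    obtain ⟨J', hJ', e', he', -⟩ := hext.2.2.1
    haveI : T2Space Y' := he'.t2Space
    have h1 : ψ ∘ φ = id := by
      refine Continuous.ext_on P1.2.1 (hψc.comp hφc) continuous_id ?_
      rintro _ ⟨x, rfl⟩
      have : φ (contEvalK E X x) = h x := congrFun hφe x
      simp only [Function.comp_apply, this, id_eq]
      exact congrFun hψh x
    have h2 : φ ∘ ψ = id := by
      refine Continuous.ext_on hext.2.1 (hφc.comp hψc) continuous_id ?_
      rintro _ ⟨x, rfl⟩
      have : ψ (h x) = contEvalK E X x := congrFun hψh x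
      simp only [Function.comp_apply, this, id_eq]
      exact congrFun hφe x
    exact ⟨⟨⟨φ, ψ, fun y => congrFun h1 y, fun y => congrFun h2 y⟩, hφc, hψc⟩,
      fun x => congrFun hφe x⟩
  · intro Z _ hZ f hf
    exact factor_aux hext hZ hf
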